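/- For each fixed y ∈ ℝ, the function (t,x) ↦ Q_ξ(t,y|x) satisfies, for all t > 0 and x ∈ ℝ, the backward Kolmogorov equation ∂Q_ξ(t,y|x)/∂t = (1/2)·∂²Q_ξ(t,y|x)/∂x² − (1/(2ξ²))·e^{−2x/ξ}·Q_ξ(t,y|x). -/

import Mathlib

open MeasureTheory Filter Topology

/-- Macdonald function of order zero: `K₀(z) = ∫_0^∞ e^{-z cosh u} du`. -/
noncomputable def K0 (z : ℝ) : ℝ := ∫ u in Set.Ioi (0:ℝ), Real.exp (-(z * Real.cosh u))

/-- Macdonald function of imaginary order: `K_{ik}(z) = ∫_0^∞ e^{-z cosh u} cos(ku) du`. -/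
noncomputable def Kik (k z : ℝ) : ℝ :=
  ∫ u in Set.Ioi (0:ℝ), Real.exp (-(z * Real.cosh u)) * Real.cos (k * u)

/-- Transition probability density `Q_ξ(t,y|x)` of the ξ-killing Brownian motion. -/
noncomputable def Qxi (ξ t y x : ℝ) : ℝ :=
  (1 / Real.pi ^ 2) *
    ∫ k : ℝ, Real.exp (-(k ^ 2 * t) / 2) * Kik (ξ * k) (Real.exp (-(x / ξ)))
      * Kik (ξ * k) (Real.exp (-(y / ξ))) * (ξ * k * Real.sinh (Real.pi * ξ * k))

/-- Survival probability `N_ξ(T,x) = ∫_ℝ Q_ξ(T,y|x) dy`. -/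
noncomputable def Nxi (ξ T x : ℝ) : ℝ := ∫ y : ℝ, Qxi ξ T y x

section QxiAux

open Real Set

noncomputable def Mn (n : ℕ) (z : ℝ) : ℝ :=
  ∫ u in Set.Ioi (0:ℝ), Real.cosh u ^ n * Real.exp (-(z * Real.cosh u))

noncomputable def Fn (n : ℕ) (k z : ℝ) : ℝ :=
  ∫ u in Set.Ioi (0:ℝ), Real.cosh u ^ n * Real.exp (-(z * Real.cosh u)) * Real.cos (k * u)

lemma cosh_le_exp_self {u : ℝ} (hu : 0 ≤ u) : Real.cosh u ≤ Real.exp u := by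
  rw [Real.cosh_eq]
  have : Real.exp (-u) ≤ Real.exp u := Real.exp_le_exp.2 (by linarith)
  linarith

lemma sq_div_le_cosh {u : ℝ} (hu : 0 ≤ u) : u^2/8 ≤ Real.cosh u := by
  have h1 : (1 + u/2) ≤ Real.exp (u/2) := by
    have := Real.add_one_le_exp (u/2); linarith
  have h2 : (1 + u/2)^2 ≤ Real.exp (u/2)^2 := by
    apply pow_le_pow_left₀ (by linarith) h1
  have h3 : Real.exp (u/2)^2 = Real.exp u := by
    rw [sq, ← Real.exp_add]; norm_num
  have h4 : Real.exp u / 2 ≤ Real.cosh u := by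
    rw [Real.cosh_eq]
    have := (Real.exp_pos (-u)).le
    linarith
  nlinarith

lemma integrableOn_Mn (n : ℕ) {z : ℝ} (hz : 0 < z) :
    IntegrableOn (fun u => Real.cosh u ^ n * Real.exp (-(z * Real.cosh u))) (Set.Ioi (0:ℝ)) := by
  apply integrable_of_isBigO_exp_neg (a := 0) one_pos
  · exact (Continuous.mul (by continuity) (by continuity)).continuousOn
  · apply Asymptotics.IsBigO.of_bound 1
    filter_upwards [eventually_ge_atTop (max 1 (8*(n+1)/z))] with u hu
    have hu1 : (1:ℝ) ≤ u := le_trans (le_max_left _ _) hu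
    have hu0 : (0:ℝ) ≤ u := by linarith
    have hR : 8*(n+1)/z ≤ u := le_trans (le_max_right _ _) hu
    have hcosh : ((n:ℝ)+1) * u ≤ z * Real.cosh u := by
      have h1 : u^2/8 ≤ Real.cosh u := sq_div_le_cosh hu0
      have h2 : 8*((n:ℝ)+1)/z * u ≤ u * u := by
        nlinarith
      have h3 : 8*((n:ℝ)+1)/z * u * (z/8) = ((n:ℝ)+1)*u := by
        field_simp
      nlinarith [Real.cosh_pos u]
    have hch : Real.cosh u ^ n ≤ Real.exp ((n:ℝ) * u) := by
      calc Real.cosh u ^ n ≤ Real.exp u ^ n :=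
            pow_le_pow_left₀ (Real.cosh_pos u).le (cosh_le_exp_self hu0) n
        _ = Real.exp ((n:ℝ)*u) := by rw [← Real.exp_nat_mul]
    rw [Real.norm_eq_abs, Real.norm_eq_abs, abs_of_nonneg (by positivity), neg_one_mul,
      abs_of_nonneg (Real.exp_pos _).le]
    calc Real.cosh u ^ n * Real.exp (-(z * Real.cosh u))
        ≤ Real.exp ((n:ℝ)*u) * Real.exp (-(((n:ℝ)+1)*u)) := by
          apply mul_le_mul hch (Real.exp_le_exp.2 (by linarith)) (Real.exp_pos _).le
            (Real.exp_pos _).le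
      _ = Real.exp (-u) := by rw [← Real.exp_add]; ring_nf
      _ = 1 * Real.exp (-u) := (one_mul _).symm

lemma Fn_integrand_integrable (n : ℕ) (k : ℝ) {z : ℝ} (hz : 0 < z) :
    IntegrableOn
      (fun u => Real.cosh u ^ n * Real.exp (-(z * Real.cosh u)) * Real.cos (k * u))
      (Set.Ioi (0:ℝ)) := by
  apply (integrableOn_Mn n hz).mono' ((Continuous.mul (by continuity) (by continuity)).aestronglyMeasurable)
  filter_upwards with u
  simp only [Pi.mul_apply]
  rw [Real.norm_eq_abs, abs_mul, abs_of_nonneg (by positivity)]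
  have := abs_cos_le_one (k*u)
  have h0 : (0:ℝ) ≤ Real.cosh u ^ n * Real.exp (-(z * Real.cosh u)) := by positivity
  nlinarith

lemma abs_Fn_le (n : ℕ) (k : ℝ) {z : ℝ} (hz : 0 < z) : |Fn n k z| ≤ Mn n z := by
  rw [Fn, Mn]
  have : |∫ u in Set.Ioi (0:ℝ), Real.cosh u ^ n * Real.exp (-(z * Real.cosh u)) * Real.cos (k * u)|
      = ‖∫ u in Set.Ioi (0:ℝ), Real.cosh u ^ n * Real.exp (-(z * Real.cosh u)) * Real.cos (k * u)‖ := rfl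
  rw [this]
  apply norm_integral_le_of_norm_le (integrableOn_Mn n hz)
  filter_upwards with u
  rw [Real.norm_eq_abs, abs_mul, abs_of_nonneg (by positivity)]
  have := abs_cos_le_one (k*u)
  have h0 : (0:ℝ) ≤ Real.cosh u ^ n * Real.exp (-(z * Real.cosh u)) := by positivity
  nlinarith

lemma Mn_nonneg (n : ℕ) (z : ℝ) : 0 ≤ Mn n z := by
  apply integral_nonneg; intro u; positivity

lemma Mn_antitone (n : ℕ) {z₁ z₂ : ℝ} (h1 : 0 < z₁) (h12 : z₁ ≤ z₂) : Mn n z₂ ≤ Mn n z₁ := by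
  apply setIntegral_mono_on (integrableOn_Mn n (lt_of_lt_of_le h1 h12)) (integrableOn_Mn n h1)
    measurableSet_Ioi
  intro u _
  have : Real.exp (-(z₂ * Real.cosh u)) ≤ Real.exp (-(z₁ * Real.cosh u)) := by
    apply Real.exp_le_exp.2
    have := (Real.cosh_pos u).le
    nlinarith
  have h0 : (0:ℝ) ≤ Real.cosh u ^ n := by positivity
  nlinarith

lemma hasDerivAt_Fn (n : ℕ) (k : ℝ) {z : ℝ} (hz : 0 < z) :
    HasDerivAt (fun w => Fn n k w) (-(Fn (n+1) k z)) z := by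
  have key := hasDerivAt_integral_of_dominated_loc_of_deriv_le
    (μ := volume.restrict (Set.Ioi (0:ℝ)))
    (F := fun w u => Real.cosh u ^ n * Real.exp (-(w * Real.cosh u)) * Real.cos (k * u))
    (F' := fun w u => -(Real.cosh u ^ (n+1) * Real.exp (-(w * Real.cosh u)) * Real.cos (k * u)))
    (x₀ := z)
    (bound := fun u => Real.cosh u ^ (n+1) * Real.exp (-(z/2 * Real.cosh u)))
    (s := Metric.ball z (z/2)) (Metric.ball_mem_nhds z (by linarith))
    (Filter.Eventually.of_forall (fun w =>
      (Continuous.mul (by continuity) (by continuity)).aestronglyMeasurable))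
    (Fn_integrand_integrable n k hz)
    ((Continuous.neg (Continuous.mul (by continuity) (by continuity))).aestronglyMeasurable)
    ?_ ((integrableOn_Mn (n+1) (by linarith : (0:ℝ) < z/2))) ?_
  · have h1 : (∫ u in Set.Ioi (0:ℝ),
        -(Real.cosh u ^ (n+1) * Real.exp (-(z * Real.cosh u)) * Real.cos (k * u)))
        = -(Fn (n+1) k z) := by
      rw [integral_neg]; rfl
    rw [← h1]
    exact key.2
  · filter_upwards with u
    intro w hw
    rw [Metric.mem_ball, Real.dist_eq, abs_lt] at hw
    have hw2 : z/2 ≤ w := by linarith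
    rw [norm_neg, Real.norm_eq_abs, abs_mul, abs_of_nonneg
      (by positivity : (0:ℝ) ≤ Real.cosh u ^ (n+1) * Real.exp (-(w * Real.cosh u)))]
    have hc := abs_cos_le_one (k*u)
    have hexp : Real.exp (-(w * Real.cosh u)) ≤ Real.exp (-(z/2 * Real.cosh u)) := by
      apply Real.exp_le_exp.2
      have := (Real.cosh_pos u).le
      nlinarith
    have h0 : (0:ℝ) ≤ Real.cosh u ^ (n+1) := by positivity
    calc Real.cosh u ^ (n+1) * Real.exp (-(w * Real.cosh u)) * |Real.cos (k*u)|
        ≤ Real.cosh u ^ (n+1) * Real.exp (-(w * Real.cosh u)) * 1 := by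
          apply mul_le_mul_of_nonneg_left hc (by positivity)
      _ = Real.cosh u ^ (n+1) * Real.exp (-(w * Real.cosh u)) := mul_one _
      _ ≤ Real.cosh u ^ (n+1) * Real.exp (-(z/2 * Real.cosh u)) :=
          mul_le_mul_of_nonneg_left hexp h0
  · filter_upwards with u
    intro w hw
    have hd : HasDerivAt (fun w : ℝ => Real.cosh u ^ n * Real.exp (-(w * Real.cosh u)) * Real.cos (k * u))
        (-(Real.cosh u ^ (n+1) * Real.exp (-(w * Real.cosh u)) * Real.cos (k * u))) w := by
      have h1 : HasDerivAt (fun w : ℝ => -(w * Real.cosh u)) (-(Real.cosh u)) w := by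
        exact ((hasDerivAt_id' w).mul_const (Real.cosh u)).neg.congr_deriv (by ring)
      have h2 := h1.exp
      have h3 := (h2.const_mul (Real.cosh u ^ n)).mul_const (Real.cos (k * u))
      refine h3.congr_deriv ?_
      ring
    exact hd


lemma Fn_zero_eq (k z : ℝ) :
    Fn 0 k z = ∫ u in Set.Ioi (0:ℝ), Real.exp (-(z * Real.cosh u)) * Real.cos (k * u) := by
  unfold Fn; simp

lemma Kik_eq_Fn (k z : ℝ) : Kik k z = Fn 0 k z := (Fn_zero_eq k z).symm

lemma Fn_ode (k : ℝ) {z : ℝ} (hz : 0 < z) :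
    z^2 * Fn 2 k z - z * Fn 1 k z + (k^2 - z^2) * Fn 0 k z = 0 := by
  set E : ℝ → ℝ := fun u => Real.exp (-(z * Real.cosh u)) with hE
  set G : ℝ → ℝ := fun u =>
    (-(z * Real.sinh u) * E u) * Real.cos (k * u) + k * (E u * Real.sin (k * u)) with hG
  set g : ℝ → ℝ := fun u =>
    z^2 * (Real.cosh u ^ 2 * E u * Real.cos (k * u))
      - z * (Real.cosh u ^ 1 * E u * Real.cos (k * u))
      + (k^2 - z^2) * (E u * Real.cos (k * u)) with hg
  have hEd : ∀ u : ℝ, HasDerivAt E (E u * (-(z * Real.sinh u))) u := fun u =>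
    (((Real.hasDerivAt_cosh u).const_mul z).neg).exp
  have hGd : ∀ u : ℝ, HasDerivAt G (g u) u := by
    intro u
    have hcos : HasDerivAt (fun u => Real.cos (k * u)) (-Real.sin (k * u) * k) u := by
      simpa using ((hasDerivAt_id u).const_mul k).cos
    have hsin : HasDerivAt (fun u => Real.sin (k * u)) (Real.cos (k * u) * k) u := by
      simpa using ((hasDerivAt_id u).const_mul k).sin
    have hzs : HasDerivAt (fun u => -(z * Real.sinh u)) (-(z * Real.cosh u)) u :=
      ((Real.hasDerivAt_sinh u).const_mul z).neg
    have hA := (hzs.mul (hEd u)).mul hcos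
    have hB := ((hEd u).mul hsin).const_mul k
    have htot := hA.add hB
    refine htot.congr_deriv ?_
    have hs : Real.sinh u ^ 2 = Real.cosh u ^ 2 - 1 := by
      have := Real.cosh_sq_sub_sinh_sq u; linarith
    simp only [hg, Pi.mul_apply]
    linear_combination (z^2 * E u * Real.cos (k * u)) * hs
  have hint2 := Fn_integrand_integrable 2 k hz
  have hint1 := Fn_integrand_integrable 1 k hz
  have hint0 : IntegrableOn (fun u => E u * Real.cos (k * u)) (Set.Ioi (0:ℝ)) := by
    simpa using Fn_integrand_integrable 0 k hz
  have hgint : IntegrableOn g (Set.Ioi (0:ℝ)) :=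
    ((hint2.const_mul _).sub (hint1.const_mul _)).add (hint0.const_mul _)
  have hE0 : ∀ u : ℝ, 0 ≤ E u := fun u => (Real.exp_pos _).le
  have hbound : ∀ u : ℝ, ‖G u‖ ≤ z * Real.cosh u * E u + |k| * E u := by
    intro u
    have hsc : |Real.sinh u| ≤ Real.cosh u := by
      rw [Real.abs_sinh, ← Real.cosh_abs u]
      have h0 : 0 ≤ Real.sinh |u| := by
        rw [← Real.sinh_zero]; exact Real.sinh_le_sinh.2 (abs_nonneg u)
      nlinarith [Real.cosh_sq_sub_sinh_sq |u|, Real.cosh_pos |u|]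
    have hA : |(-(z * Real.sinh u) * E u) * Real.cos (k * u)| ≤ z * Real.cosh u * E u := by
      rw [abs_mul, abs_mul, abs_neg, abs_mul, abs_of_nonneg hz.le, abs_of_nonneg (hE0 u)]
      calc z * |Real.sinh u| * E u * |Real.cos (k * u)|
          ≤ z * |Real.sinh u| * E u * 1 :=
            mul_le_mul_of_nonneg_left (abs_cos_le_one _) (by positivity)
        _ = z * |Real.sinh u| * E u := mul_one _
        _ ≤ z * Real.cosh u * E u :=
            mul_le_mul_of_nonneg_right (mul_le_mul_of_nonneg_left hsc hz.le) (hE0 u)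
    have hB : |k * (E u * Real.sin (k * u))| ≤ |k| * E u := by
      rw [abs_mul, abs_mul, abs_of_nonneg (hE0 u)]
      calc |k| * (E u * |Real.sin (k * u)|) ≤ |k| * (E u * 1) := by
            apply mul_le_mul_of_nonneg_left _ (abs_nonneg k)
            exact mul_le_mul_of_nonneg_left (abs_sin_le_one _) (hE0 u)
        _ = |k| * E u := by ring
    calc ‖G u‖ ≤ |(-(z * Real.sinh u) * E u) * Real.cos (k * u)|
          + |k * (E u * Real.sin (k * u))| := abs_add_le _ _
      _ ≤ z * Real.cosh u * E u + |k| * E u := add_le_add hA hB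
  have t1 : Tendsto (fun u => z * Real.cosh u) atTop atTop := by
    apply tendsto_atTop_mono (f := fun u => z/2 * Real.exp u)
    · intro u
      have h4 : Real.exp u / 2 ≤ Real.cosh u := by
        rw [Real.cosh_eq]
        have := (Real.exp_pos (-u)).le
        linarith
      nlinarith
    · exact Tendsto.const_mul_atTop (by linarith) Real.tendsto_exp_atTop
  have t2 : Tendsto (fun u => z * Real.cosh u * E u) atTop (𝓝 0) := by
    have := (Real.tendsto_pow_mul_exp_neg_atTop_nhds_zero 1).comp t1
    simpa [Function.comp_def, hE, pow_one] using this
  have t3 : Tendsto (fun u => |k| * E u) atTop (𝓝 0) := by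
    have := (Real.tendsto_exp_neg_atTop_nhds_zero.comp t1).const_mul |k|
    simpa [Function.comp, hE] using this
  have tG : Tendsto G atTop (𝓝 0) := by
    apply squeeze_zero_norm hbound
    simpa using t2.add t3
  have hftc := integral_Ioi_of_hasDerivAt_of_tendsto' (f := G) (f' := g) (a := 0)
    (fun u _ => hGd u) hgint tG
  have hG0 : G 0 = 0 := by simp [hG]
  rw [hG0, sub_zero] at hftc
  have X2 : IntegrableOn (fun u => z ^ 2 * (Real.cosh u ^ 2 * Real.exp (-(z * Real.cosh u)) * Real.cos (k * u))) (Set.Ioi (0:ℝ)) := hint2.const_mul _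
  have X1 : IntegrableOn (fun u => z * (Real.cosh u ^ 1 * Real.exp (-(z * Real.cosh u)) * Real.cos (k * u))) (Set.Ioi (0:ℝ)) := hint1.const_mul _
  have X0 : IntegrableOn (fun u => (k ^ 2 - z ^ 2) * (Real.exp (-(z * Real.cosh u)) * Real.cos (k * u))) (Set.Ioi (0:ℝ)) := by
    have := hint0.const_mul (k ^ 2 - z ^ 2); exact this
  have Xsub : IntegrableOn (fun u => z ^ 2 * (Real.cosh u ^ 2 * Real.exp (-(z * Real.cosh u)) * Real.cos (k * u)) - z * (Real.cosh u ^ 1 * Real.exp (-(z * Real.cosh u)) * Real.cos (k * u))) (Set.Ioi (0:ℝ)) := X2.sub X1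
  have hsplit : ∫ u in Set.Ioi (0:ℝ), g u
      = z^2 * Fn 2 k z - z * Fn 1 k z + (k^2 - z^2) * Fn 0 k z := by
    simp only [hg, hE]
    rw [integral_add Xsub X0, integral_sub X2 X1, integral_const_mul, integral_const_mul,
      integral_const_mul, Fn_zero_eq]
    rfl
  rw [hftc] at hsplit
  linarith [hsplit]


lemma hasDerivAt_phi (ξ : ℝ) (x : ℝ) :
    HasDerivAt (fun r : ℝ => Real.exp (-(r/ξ))) (Real.exp (-(x/ξ)) * (-(1/ξ))) x := by
  have h : HasDerivAt (fun r : ℝ => -(r/ξ)) (-(1/ξ)) x := ((hasDerivAt_id x).div_const ξ).neg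
  simpa using h.exp

lemma hasDerivAt_h0 (ξ k : ℝ) (hξ : 0 < ξ) (x : ℝ) :
    HasDerivAt (fun r : ℝ => Fn 0 k (Real.exp (-(r/ξ))))
      (Real.exp (-(x/ξ)) / ξ * Fn 1 k (Real.exp (-(x/ξ)))) x := by
  have h := (hasDerivAt_Fn 0 k (Real.exp_pos (-(x/ξ)))).comp x (hasDerivAt_phi ξ x)
  refine h.congr_deriv ?_
  ring

lemma hasDerivAt_h1 (ξ k : ℝ) (hξ : 0 < ξ) (x : ℝ) :
    HasDerivAt (fun r : ℝ => Real.exp (-(r/ξ)) / ξ * Fn 1 k (Real.exp (-(r/ξ))))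
      (Real.exp (-(x/ξ))^2/ξ^2 * Fn 2 k (Real.exp (-(x/ξ)))
        - Real.exp (-(x/ξ))/ξ^2 * Fn 1 k (Real.exp (-(x/ξ)))) x := by
  have hFn := (hasDerivAt_Fn 1 k (Real.exp_pos (-(x/ξ)))).comp x (hasDerivAt_phi ξ x)
  have h := ((hasDerivAt_phi ξ x).div_const ξ).mul hFn
  refine h.congr_deriv ?_
  simp only [Function.comp_apply]
  field_simp
  ring

lemma pointwise_ode (ξ k : ℝ) (hξ : 0 < ξ) (x : ℝ) :
    (1/2) * (Real.exp (-(x/ξ))^2/ξ^2 * Fn 2 (ξ*k) (Real.exp (-(x/ξ)))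
        - Real.exp (-(x/ξ))/ξ^2 * Fn 1 (ξ*k) (Real.exp (-(x/ξ))))
      - 1/(2*ξ^2) * Real.exp (-(x/ξ))^2 * Fn 0 (ξ*k) (Real.exp (-(x/ξ)))
      = -(k^2)/2 * Fn 0 (ξ*k) (Real.exp (-(x/ξ))) := by
  set z := Real.exp (-(x/ξ)) with hzdef
  set F0 := Fn 0 (ξ*k) z
  set F1 := Fn 1 (ξ*k) z
  set F2 := Fn 2 (ξ*k) z
  have hode : z^2 * F2 - z * F1 + ((ξ*k)^2 - z^2) * F0 = 0 :=
    Fn_ode (ξ*k) (Real.exp_pos (-(x/ξ)))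
  have hξ2 : (ξ:ℝ)^2 ≠ 0 := by positivity
  field_simp
  linarith [hode]

lemma continuous_Fn_k (n : ℕ) {z : ℝ} (hz : 0 < z) :
    Continuous fun k : ℝ => Fn n k z := by
  apply continuous_of_dominated (bound := fun u => Real.cosh u ^ n * Real.exp (-(z * Real.cosh u)))
  · exact fun k => (Continuous.mul (by continuity) (by continuity)).aestronglyMeasurable
  · intro k
    filter_upwards with u
    rw [Real.norm_eq_abs, abs_mul, abs_of_nonneg (by positivity)]
    calc Real.cosh u ^ n * Real.exp (-(z * Real.cosh u)) * |Real.cos (k * u)|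
        ≤ Real.cosh u ^ n * Real.exp (-(z * Real.cosh u)) * 1 :=
          mul_le_mul_of_nonneg_left (abs_cos_le_one _) (by positivity)
      _ = Real.cosh u ^ n * Real.exp (-(z * Real.cosh u)) := mul_one _
  · exact integrableOn_Mn n hz
  · filter_upwards with u
    exact continuous_const.mul (Real.continuous_cos.comp (continuous_id.mul continuous_const))


/-- master dominating function on the `k`-side -/
noncomputable def bnd (ξ t : ℝ) (k : ℝ) : ℝ :=
  (1 + k^2) * (|k| * Real.exp (Real.pi * ξ * |k|)) * Real.exp (-(k^2*t)/2)

lemma bnd_nonneg (ξ t k : ℝ) : 0 ≤ bnd ξ t k := by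
  unfold bnd; positivity

lemma integrable_exp_lin_quad {t : ℝ} (ht : 0 < t) (c : ℝ) :
    Integrable (fun k : ℝ => Real.exp (c * k - k^2*t/2)) := by
  have h1 : Integrable (fun k : ℝ =>
      Real.exp (c^2/(2*t)) * Real.exp (-(t/2) * (k - c/t)^2)) :=
    ((integrable_exp_neg_mul_sq (half_pos ht)).comp_sub_right (c/t)).const_mul _
  apply h1.congr
  filter_upwards with k
  rw [← Real.exp_add]
  congr 1
  field_simp
  ring

lemma integrable_exp_abs_quad {t : ℝ} (ht : 0 < t) (c : ℝ) :
    Integrable (fun k : ℝ => Real.exp (c * |k| - k^2*t/2)) := by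
  apply Integrable.mono' ((integrable_exp_lin_quad ht c).add (integrable_exp_lin_quad ht (-c)))
  · apply Continuous.aestronglyMeasurable
    continuity
  · filter_upwards with k
    rw [Real.norm_eq_abs, abs_of_nonneg (Real.exp_pos _).le]
    have hadd : ((fun k : ℝ => Real.exp (c * k - k^2*t/2))
        + fun k : ℝ => Real.exp (-c * k - k^2*t/2)) k
        = Real.exp (c * k - k^2*t/2) + Real.exp (-c * k - k^2*t/2) := rfl
    rw [hadd]
    rcases abs_cases k with ⟨h, _⟩ | ⟨h, _⟩
    · rw [h]
      have := (Real.exp_pos ((-c) * k - k^2*t/2)).le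
      linarith
    · rw [h]
      have h2 : c * -k - k ^ 2 * t / 2 = -c * k - k^2*t/2 := by ring
      rw [h2]
      have := (Real.exp_pos (c * k - k^2*t/2)).le
      linarith
  
lemma integrable_bnd {ξ t : ℝ} (hξ : 0 < ξ) (ht : 0 < t) : Integrable (bnd ξ t) := by
  apply Integrable.mono'
    (((integrable_exp_abs_quad ht (Real.pi * ξ + 3)).const_mul 2))
  · apply Continuous.aestronglyMeasurable
    unfold bnd
    continuity
  · filter_upwards with k
    rw [Real.norm_eq_abs, abs_of_nonneg (bnd_nonneg ξ t k)]
    have habs : |k| ≤ Real.exp |k| := by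
      have := Real.add_one_le_exp |k|
      have := abs_nonneg k
      linarith
    have hsq : k^2 ≤ Real.exp (2*|k|) := by
      have h1 : k^2 = |k|^2 := (sq_abs k).symm
      have h2 : |k|^2 ≤ Real.exp |k| ^ 2 := by
        apply pow_le_pow_left₀ (abs_nonneg k) habs
      have h3 : Real.exp |k| ^ 2 = Real.exp (2*|k|) := by
        rw [sq, ← Real.exp_add]; ring_nf
      linarith [h1 ▸ h2, h3 ▸ h2]
    have h1k : 1 + k^2 ≤ 2 * Real.exp (2*|k|) := by
      have : (1:ℝ) ≤ Real.exp (2*|k|) := by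
        rw [← Real.exp_zero]
        apply Real.exp_le_exp.2
        positivity
      linarith
    have key : bnd ξ t k ≤ 2 * Real.exp ((Real.pi * ξ + 3) * |k| - k^2*t/2) := by
      unfold bnd
      have e1 : Real.exp ((Real.pi * ξ + 3) * |k| - k^2*t/2)
          = Real.exp (2*|k|) * (Real.exp |k| * Real.exp (Real.pi * ξ * |k|))
            * Real.exp (-(k^2*t)/2) := by
        rw [← Real.exp_add, ← Real.exp_add, ← Real.exp_add]; ring_nf
      rw [e1]
      have hb1 : (1 + k^2) * (|k| * Real.exp (Real.pi * ξ * |k|))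
          ≤ (2 * Real.exp (2*|k|)) * (Real.exp |k| * Real.exp (Real.pi * ξ * |k|)) := by
        apply mul_le_mul h1k _ (by positivity) (by positivity)
        exact mul_le_mul_of_nonneg_right habs (Real.exp_pos _).le
      calc (1 + k^2) * (|k| * Real.exp (Real.pi * ξ * |k|)) * Real.exp (-(k^2*t)/2)
          ≤ (2 * Real.exp (2*|k|)) * (Real.exp |k| * Real.exp (Real.pi * ξ * |k|))
            * Real.exp (-(k^2*t)/2) :=
            mul_le_mul_of_nonneg_right hb1 (Real.exp_pos _).le
        _ = 2 * (Real.exp (2*|k|) * (Real.exp |k| * Real.exp (Real.pi * ξ * |k|))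
            * Real.exp (-(k^2*t)/2)) := by ring
    exact key


lemma abs_sinh_le_exp (v : ℝ) : |Real.sinh v| ≤ Real.exp |v| := by
  rw [Real.abs_sinh]
  have h1 : Real.sinh |v| ≤ Real.cosh |v| := by
    rw [Real.sinh_eq, Real.cosh_eq]
    have := (Real.exp_pos (-|v|)).le
    linarith
  exact h1.trans (cosh_le_exp_self (abs_nonneg v))

lemma abs_S_le {ξ : ℝ} (hξ : 0 < ξ) (k : ℝ) :
    |ξ * k * Real.sinh (Real.pi * ξ * k)| ≤ ξ * (|k| * Real.exp (Real.pi * ξ * |k|)) := by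
  rw [abs_mul, abs_mul, abs_of_nonneg hξ.le]
  have h1 : |Real.sinh (Real.pi * ξ * k)| ≤ Real.exp (Real.pi * ξ * |k|) := by
    have := abs_sinh_le_exp (Real.pi * ξ * k)
    rwa [abs_mul, abs_mul, abs_of_nonneg Real.pi_pos.le, abs_of_nonneg hξ.le] at this
  calc ξ * |k| * |Real.sinh (Real.pi * ξ * k)| ≤ ξ * |k| * Real.exp (Real.pi * ξ * |k|) :=
        mul_le_mul_of_nonneg_left h1 (by positivity)
    _ = ξ * (|k| * Real.exp (Real.pi * ξ * |k|)) := by ring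

lemma abs_Kik_le (q : ℝ) {z : ℝ} (hz : 0 < z) : |Kik q z| ≤ Mn 0 z := by
  rw [Kik_eq_Fn]; exact abs_Fn_le 0 q hz

noncomputable def Wfun (ξ y s x k : ℝ) : ℝ :=
  Real.exp (-(k ^ 2 * s) / 2) * Kik (ξ * k) (Real.exp (-(x / ξ)))
    * Kik (ξ * k) (Real.exp (-(y / ξ))) * (ξ * k * Real.sinh (Real.pi * ξ * k))

noncomputable def W1 (ξ y t x k : ℝ) : ℝ :=
  Real.exp (-(k ^ 2 * t) / 2)
    * (Real.exp (-(x / ξ)) / ξ * Fn 1 (ξ * k) (Real.exp (-(x / ξ))))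
    * Kik (ξ * k) (Real.exp (-(y / ξ))) * (ξ * k * Real.sinh (Real.pi * ξ * k))

noncomputable def W2 (ξ y t x k : ℝ) : ℝ :=
  Real.exp (-(k ^ 2 * t) / 2)
    * (Real.exp (-(x / ξ))^2 / ξ^2 * Fn 2 (ξ * k) (Real.exp (-(x / ξ)))
        - Real.exp (-(x / ξ)) / ξ^2 * Fn 1 (ξ * k) (Real.exp (-(x / ξ))))
    * Kik (ξ * k) (Real.exp (-(y / ξ))) * (ξ * k * Real.sinh (Real.pi * ξ * k))

lemma continuous_Fnk_k (n : ℕ) (ξ : ℝ) {z : ℝ} (hz : 0 < z) :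
    Continuous fun k : ℝ => Fn n (ξ * k) z :=
  (continuous_Fn_k n hz).comp (continuous_const.mul continuous_id)

lemma continuous_Kik_k (ξ : ℝ) {z : ℝ} (hz : 0 < z) :
    Continuous fun k : ℝ => Kik (ξ * k) z := by
  have h : (fun k : ℝ => Kik (ξ * k) z) = fun k : ℝ => Fn 0 (ξ * k) z :=
    funext fun k => Kik_eq_Fn _ _
  rw [h]; exact continuous_Fnk_k 0 ξ hz

lemma continuous_S (ξ : ℝ) : Continuous fun k : ℝ => ξ * k * Real.sinh (Real.pi * ξ * k) := by
  have : Continuous fun k : ℝ => Real.sinh (Real.pi * ξ * k) :=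
    Real.continuous_sinh.comp (continuous_const.mul continuous_id)
  exact (continuous_const.mul continuous_id).mul this

lemma continuous_Wfun_k (ξ y s x : ℝ) (hξ : 0 < ξ) :
    Continuous fun k : ℝ => Wfun ξ y s x k := by
  unfold Wfun
  refine Continuous.mul (Continuous.mul (Continuous.mul ?_ ?_) ?_) (continuous_S ξ)
  · have : Continuous fun k : ℝ => -(k ^ 2 * s) / 2 := by continuity
    exact Real.continuous_exp.comp this
  · exact continuous_Kik_k ξ (Real.exp_pos _)
  · exact continuous_Kik_k ξ (Real.exp_pos _)

lemma continuous_W1_k (ξ y t x : ℝ) (hξ : 0 < ξ) :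
    Continuous fun k : ℝ => W1 ξ y t x k := by
  unfold W1
  refine Continuous.mul (Continuous.mul (Continuous.mul ?_ ?_) ?_) (continuous_S ξ)
  · have : Continuous fun k : ℝ => -(k ^ 2 * t) / 2 := by continuity
    exact Real.continuous_exp.comp this
  · exact continuous_const.mul (continuous_Fnk_k 1 ξ (Real.exp_pos _))
  · exact continuous_Kik_k ξ (Real.exp_pos _)

lemma continuous_W2_k (ξ y t x : ℝ) (hξ : 0 < ξ) :
    Continuous fun k : ℝ => W2 ξ y t x k := by
  unfold W2
  refine Continuous.mul (Continuous.mul (Continuous.mul ?_ ?_) ?_) (continuous_S ξ)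
  · have : Continuous fun k : ℝ => -(k ^ 2 * t) / 2 := by continuity
    exact Real.continuous_exp.comp this
  · exact Continuous.sub (continuous_const.mul (continuous_Fnk_k 2 ξ (Real.exp_pos _)))
      (continuous_const.mul (continuous_Fnk_k 1 ξ (Real.exp_pos _)))
  · exact continuous_Kik_k ξ (Real.exp_pos _)

lemma abs_Wfun_le {ξ : ℝ} (hξ : 0 < ξ) (y s x k : ℝ) :
    |Wfun ξ y s x k| ≤ Mn 0 (Real.exp (-(x / ξ))) * Mn 0 (Real.exp (-(y / ξ))) * ξ
      * (|k| * Real.exp (Real.pi * ξ * |k|)) * Real.exp (-(k ^ 2 * s) / 2) := by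
  unfold Wfun
  rw [abs_mul, abs_mul, abs_mul, abs_of_nonneg (Real.exp_pos _).le]
  have h1 := abs_Kik_le (ξ * k) (Real.exp_pos (-(x / ξ)))
  have h2 := abs_Kik_le (ξ * k) (Real.exp_pos (-(y / ξ)))
  have h3 := abs_S_le hξ k
  have e0 : (0:ℝ) ≤ Real.exp (-(k ^ 2 * s) / 2) := (Real.exp_pos _).le
  calc Real.exp (-(k ^ 2 * s) / 2) * |Kik (ξ * k) (Real.exp (-(x / ξ)))|
        * |Kik (ξ * k) (Real.exp (-(y / ξ)))| * |ξ * k * Real.sinh (Real.pi * ξ * k)|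
      ≤ Real.exp (-(k ^ 2 * s) / 2) * Mn 0 (Real.exp (-(x / ξ)))
        * Mn 0 (Real.exp (-(y / ξ))) * (ξ * (|k| * Real.exp (Real.pi * ξ * |k|))) := by
        have s1 : Real.exp (-(k ^ 2 * s) / 2) * |Kik (ξ * k) (Real.exp (-(x / ξ)))|
            ≤ Real.exp (-(k ^ 2 * s) / 2) * Mn 0 (Real.exp (-(x / ξ))) :=
          mul_le_mul_of_nonneg_left h1 e0
        have s2 := mul_le_mul s1 h2 (abs_nonneg _)
          (mul_nonneg e0 (Mn_nonneg _ _))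
        exact mul_le_mul s2 h3 (abs_nonneg _)
          (mul_nonneg (mul_nonneg e0 (Mn_nonneg _ _)) (Mn_nonneg _ _))
    _ = Mn 0 (Real.exp (-(x / ξ))) * Mn 0 (Real.exp (-(y / ξ))) * ξ
      * (|k| * Real.exp (Real.pi * ξ * |k|)) * Real.exp (-(k ^ 2 * s) / 2) := by ring

lemma integrable_Wfun {ξ t : ℝ} (hξ : 0 < ξ) (ht : 0 < t) (y x : ℝ) :
    Integrable (fun k : ℝ => Wfun ξ y t x k) := by
  apply Integrable.mono'
    ((integrable_bnd hξ ht).const_mul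
      (Mn 0 (Real.exp (-(x / ξ))) * Mn 0 (Real.exp (-(y / ξ))) * ξ))
    (continuous_Wfun_k ξ y t x hξ).aestronglyMeasurable
  filter_upwards with k
  rw [Real.norm_eq_abs]
  refine (abs_Wfun_le hξ y t x k).trans ?_
  have hM : 0 ≤ Mn 0 (Real.exp (-(x / ξ))) * Mn 0 (Real.exp (-(y / ξ))) * ξ :=
    mul_nonneg (mul_nonneg (Mn_nonneg _ _) (Mn_nonneg _ _)) hξ.le
  calc Mn 0 (Real.exp (-(x / ξ))) * Mn 0 (Real.exp (-(y / ξ))) * ξ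
        * (|k| * Real.exp (Real.pi * ξ * |k|)) * Real.exp (-(k ^ 2 * t) / 2)
      = (Mn 0 (Real.exp (-(x / ξ))) * Mn 0 (Real.exp (-(y / ξ))) * ξ)
        * (1 * ((|k| * Real.exp (Real.pi * ξ * |k|)) * Real.exp (-(k ^ 2 * t) / 2))) := by ring
    _ ≤ (Mn 0 (Real.exp (-(x / ξ))) * Mn 0 (Real.exp (-(y / ξ))) * ξ)
        * ((1 + k^2) * ((|k| * Real.exp (Real.pi * ξ * |k|)) * Real.exp (-(k ^ 2 * t) / 2))) := by
        apply mul_le_mul_of_nonneg_left _ hM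
        apply mul_le_mul_of_nonneg_right _ (by positivity)
        nlinarith [sq_nonneg k]
    _ = (Mn 0 (Real.exp (-(x / ξ))) * Mn 0 (Real.exp (-(y / ξ))) * ξ) * bnd ξ t k := by
        unfold bnd; ring


lemma stepT {ξ t : ℝ} (hξ : 0 < ξ) (ht : 0 < t) (y x : ℝ) :
    HasDerivAt (fun s => ∫ k : ℝ, Wfun ξ y s x k)
      (∫ k : ℝ, -(k ^ 2) / 2 * Wfun ξ y t x k) t := by
  set C := Mn 0 (Real.exp (-(x / ξ))) * Mn 0 (Real.exp (-(y / ξ))) * ξ with hC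
  have hCnn : 0 ≤ C := mul_nonneg (mul_nonneg (Mn_nonneg _ _) (Mn_nonneg _ _)) hξ.le
  have key := hasDerivAt_integral_of_dominated_loc_of_deriv_le (s := Metric.ball t (t/2)) (Metric.ball_mem_nhds t (by linarith))
    (F := fun s k => Wfun ξ y s x k)
    (F' := fun s k => -(k ^ 2) / 2 * Wfun ξ y s x k)
    (x₀ := t)
    (bound := fun k => C * bnd ξ (t/2) k)
    (Filter.Eventually.of_forall fun s =>
      (continuous_Wfun_k ξ y s x hξ).aestronglyMeasurable)
    (integrable_Wfun hξ ht y x)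
    ((Continuous.mul (by continuity) (continuous_Wfun_k ξ y t x hξ)).aestronglyMeasurable)
    ?_ ((integrable_bnd hξ (by linarith : (0:ℝ) < t/2)).const_mul C) ?_
  · exact key.2
  · filter_upwards with k
    intro s hs
    rw [Metric.mem_ball, Real.dist_eq, abs_lt] at hs
    have hs2 : t/2 ≤ s := by linarith
    rw [Real.norm_eq_abs, abs_mul]
    have h1 : |(-(k ^ 2) / 2)| = k^2/2 := by
      rw [abs_div, abs_neg, abs_of_nonneg (sq_nonneg k)]
      norm_num
    rw [h1]
    have h2 := abs_Wfun_le hξ y s x k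
    have h3 : Real.exp (-(k ^ 2 * s) / 2) ≤ Real.exp (-(k ^ 2 * (t/2)) / 2) := by
      apply Real.exp_le_exp.2
      have := sq_nonneg k
      nlinarith
    have hE : (0:ℝ) ≤ |k| * Real.exp (Real.pi * ξ * |k|) := by positivity
    calc k^2/2 * |Wfun ξ y s x k|
        ≤ k^2/2 * (C * (|k| * Real.exp (Real.pi * ξ * |k|)) * Real.exp (-(k ^ 2 * s) / 2)) := by
          apply mul_le_mul_of_nonneg_left _ (by positivity)
          calc |Wfun ξ y s x k| ≤ C * (|k| * Real.exp (Real.pi * ξ * |k|))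
              * Real.exp (-(k ^ 2 * s) / 2) := h2
            _ = C * (|k| * Real.exp (Real.pi * ξ * |k|)) * Real.exp (-(k ^ 2 * s) / 2) := rfl
      _ ≤ (1 + k^2) * (C * (|k| * Real.exp (Real.pi * ξ * |k|))
            * Real.exp (-(k ^ 2 * (t/2)) / 2)) := by
          have hq : k^2/2 ≤ 1 + k^2 := by nlinarith [sq_nonneg k]
          have hbase : C * (|k| * Real.exp (Real.pi * ξ * |k|)) * Real.exp (-(k ^ 2 * s) / 2)
              ≤ C * (|k| * Real.exp (Real.pi * ξ * |k|)) * Real.exp (-(k ^ 2 * (t/2)) / 2) :=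
            mul_le_mul_of_nonneg_left h3 (mul_nonneg hCnn hE)
          apply mul_le_mul hq hbase (by positivity) (by nlinarith [sq_nonneg k])
      _ = C * bnd ξ (t/2) k := by unfold bnd; ring
  · filter_upwards with k
    intro s hs
    have hexp : HasDerivAt (fun s : ℝ => Real.exp (-(k ^ 2 * s) / 2))
        (Real.exp (-(k ^ 2 * s) / 2) * (-(k ^ 2) / 2)) s := by
      have hin : HasDerivAt (fun s : ℝ => -(k ^ 2 * s) / 2) (-(k ^ 2) / 2) s := by
        simpa using (((hasDerivAt_id s).const_mul (k^2)).neg.div_const 2)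
      exact hin.exp
    have h := ((hexp.mul_const (Kik (ξ * k) (Real.exp (-(x / ξ))))).mul_const
      (Kik (ξ * k) (Real.exp (-(y / ξ))))).mul_const (ξ * k * Real.sinh (Real.pi * ξ * k))
    have hfun : (fun s => Wfun ξ y s x k) = fun s =>
        Real.exp (-(k ^ 2 * s) / 2) * Kik (ξ * k) (Real.exp (-(x / ξ)))
          * Kik (ξ * k) (Real.exp (-(y / ξ))) * (ξ * k * Real.sinh (Real.pi * ξ * k)) := rfl
    rw [hfun]
    refine h.congr_deriv ?_
    unfold Wfun
    ring


lemma zr_bounds {ξ x r : ℝ} (hξ : 0 < ξ) (hr : r ∈ Metric.ball x 1) :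
    Real.exp (-((x+1)/ξ)) ≤ Real.exp (-(r/ξ)) ∧
      Real.exp (-(r/ξ)) ≤ Real.exp (-((x-1)/ξ)) := by
  rw [Metric.mem_ball, Real.dist_eq, abs_lt] at hr
  constructor
  · exact Real.exp_le_exp.2 (neg_le_neg ((div_le_div_iff_of_pos_right hξ).2 (by linarith)))
  · exact Real.exp_le_exp.2 (neg_le_neg ((div_le_div_iff_of_pos_right hξ).2 (by linarith)))

lemma stepX1 {ξ t : ℝ} (hξ : 0 < ξ) (ht : 0 < t) (y x : ℝ) :
    Integrable (fun k : ℝ => W1 ξ y t x k) ∧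
      HasDerivAt (fun r => ∫ k : ℝ, Wfun ξ y t r k) (∫ k : ℝ, W1 ξ y t x k) x := by
  set zl := Real.exp (-((x+1)/ξ)) with hzl
  set zu := Real.exp (-((x-1)/ξ)) with hzu
  set C := zu/ξ * Mn 1 zl * Mn 0 (Real.exp (-(y / ξ))) * ξ with hC
  have hzl0 : 0 < zl := Real.exp_pos _
  have hCnn : 0 ≤ C := by
    rw [hC]
    exact mul_nonneg (mul_nonneg (mul_nonneg (div_nonneg (Real.exp_pos _).le hξ.le)
      (Mn_nonneg _ _)) (Mn_nonneg _ _)) hξ.le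
  have key := hasDerivAt_integral_of_dominated_loc_of_deriv_le (s := Metric.ball x 1) (Metric.ball_mem_nhds x one_pos)
    (F := fun r k => Wfun ξ y t r k)
    (F' := fun r k => W1 ξ y t r k)
    (x₀ := x)
    (bound := fun k => C * bnd ξ t k)
    (Filter.Eventually.of_forall fun r =>
      (continuous_Wfun_k ξ y t r hξ).aestronglyMeasurable)
    (integrable_Wfun hξ ht y x)
    (continuous_W1_k ξ y t x hξ).aestronglyMeasurable
    ?_ ((integrable_bnd hξ ht).const_mul C) ?_
  · exact key
  · filter_upwards with k
    intro r hr
    obtain ⟨hl, hu⟩ := zr_bounds hξ hr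
    have hzr0 : 0 < Real.exp (-(r/ξ)) := Real.exp_pos _
    have hM1 : |Fn 1 (ξ*k) (Real.exp (-(r/ξ)))| ≤ Mn 1 zl :=
      (abs_Fn_le 1 (ξ*k) hzr0).trans (Mn_antitone 1 hzl0 hl)
    have hKw := abs_Kik_le (ξ * k) (Real.exp_pos (-(y / ξ)))
    have hS := abs_S_le hξ k
    have e0 : (0:ℝ) ≤ Real.exp (-(k ^ 2 * t) / 2) := (Real.exp_pos _).le
    rw [Real.norm_eq_abs]
    have habs : |W1 ξ y t r k| = Real.exp (-(k ^ 2 * t) / 2)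
        * |Real.exp (-(r / ξ)) / ξ * Fn 1 (ξ * k) (Real.exp (-(r / ξ)))|
        * |Kik (ξ * k) (Real.exp (-(y / ξ)))| * |ξ * k * Real.sinh (Real.pi * ξ * k)| := by
      unfold W1
      rw [abs_mul, abs_mul, abs_mul, abs_of_nonneg e0]
    rw [habs]
    have hmid : |Real.exp (-(r / ξ)) / ξ * Fn 1 (ξ * k) (Real.exp (-(r / ξ)))|
        ≤ zu/ξ * Mn 1 zl := by
      rw [abs_mul, abs_of_nonneg (div_nonneg (Real.exp_pos _).le hξ.le)]
      apply mul_le_mul ((div_le_div_iff_of_pos_right hξ).2 hu) hM1 (abs_nonneg _)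
        (div_nonneg (Real.exp_pos _).le hξ.le)
    have s1 : Real.exp (-(k ^ 2 * t) / 2)
        * |Real.exp (-(r / ξ)) / ξ * Fn 1 (ξ * k) (Real.exp (-(r / ξ)))|
        ≤ Real.exp (-(k ^ 2 * t) / 2) * (zu/ξ * Mn 1 zl) :=
      mul_le_mul_of_nonneg_left hmid e0
    have hmidnn : (0:ℝ) ≤ zu/ξ * Mn 1 zl :=
      mul_nonneg (div_nonneg (Real.exp_pos _).le hξ.le) (Mn_nonneg _ _)
    have s2 := mul_le_mul s1 hKw (abs_nonneg _) (mul_nonneg e0 hmidnn)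
    have s3 := mul_le_mul s2 hS (abs_nonneg _)
      (mul_nonneg (mul_nonneg e0 hmidnn) (Mn_nonneg _ _))
    refine s3.trans ?_
    have h1k : (1:ℝ) ≤ 1 + k^2 := by nlinarith [sq_nonneg k]
    calc Real.exp (-(k ^ 2 * t) / 2) * (zu/ξ * Mn 1 zl) * Mn 0 (Real.exp (-(y / ξ)))
          * (ξ * (|k| * Real.exp (Real.pi * ξ * |k|)))
        = C * (1 * ((|k| * Real.exp (Real.pi * ξ * |k|)) * Real.exp (-(k ^ 2 * t) / 2))) := by
          rw [hC]; ring
      _ ≤ C * ((1 + k^2) * ((|k| * Real.exp (Real.pi * ξ * |k|)) * Real.exp (-(k ^ 2 * t) / 2))) := by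
          apply mul_le_mul_of_nonneg_left _ hCnn
          apply mul_le_mul_of_nonneg_right h1k (by positivity)
      _ = C * bnd ξ t k := by unfold bnd; ring
  · filter_upwards with k
    intro r hr
    have hfun : (fun r => Wfun ξ y t r k) = fun r =>
        Real.exp (-(k ^ 2 * t) / 2) * Fn 0 (ξ * k) (Real.exp (-(r / ξ)))
          * Kik (ξ * k) (Real.exp (-(y / ξ))) * (ξ * k * Real.sinh (Real.pi * ξ * k)) := by
      funext r
      unfold Wfun
      rw [Kik_eq_Fn (ξ * k) (Real.exp (-(r / ξ)))]
    rw [hfun]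
    have h := (((hasDerivAt_h0 ξ (ξ*k) hξ r).const_mul
        (Real.exp (-(k ^ 2 * t) / 2))).mul_const
        (Kik (ξ * k) (Real.exp (-(y / ξ))))).mul_const
        (ξ * k * Real.sinh (Real.pi * ξ * k))
    exact h


lemma stepX2 {ξ t : ℝ} (hξ : 0 < ξ) (ht : 0 < t) (y x : ℝ) :
    Integrable (fun k : ℝ => W2 ξ y t x k) ∧
      HasDerivAt (fun r => ∫ k : ℝ, W1 ξ y t r k) (∫ k : ℝ, W2 ξ y t x k) x := by
  set zl := Real.exp (-((x+1)/ξ)) with hzl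
  set zu := Real.exp (-((x-1)/ξ)) with hzu
  have hzl0 : 0 < zl := Real.exp_pos _
  have hzu0 : 0 < zu := Real.exp_pos _
  set D := zu^2/ξ^2 * Mn 2 zl + zu/ξ^2 * Mn 1 zl with hD
  set C := D * Mn 0 (Real.exp (-(y / ξ))) * ξ with hC
  have hDnn : 0 ≤ D := by
    rw [hD]
    have h1 : (0:ℝ) ≤ zu^2/ξ^2 := by positivity
    have h2 : (0:ℝ) ≤ zu/ξ^2 := by positivity
    nlinarith [Mn_nonneg 2 zl, Mn_nonneg 1 zl]
  have hCnn : 0 ≤ C := by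
    rw [hC]
    exact mul_nonneg (mul_nonneg hDnn (Mn_nonneg _ _)) hξ.le
  have key := hasDerivAt_integral_of_dominated_loc_of_deriv_le (s := Metric.ball x 1) (Metric.ball_mem_nhds x one_pos)
    (F := fun r k => W1 ξ y t r k)
    (F' := fun r k => W2 ξ y t r k)
    (x₀ := x)
    (bound := fun k => C * bnd ξ t k)
    (Filter.Eventually.of_forall fun r =>
      (continuous_W1_k ξ y t r hξ).aestronglyMeasurable)
    (stepX1 hξ ht y x).1
    (continuous_W2_k ξ y t x hξ).aestronglyMeasurable
    ?_ ((integrable_bnd hξ ht).const_mul C) ?_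
  · exact key
  · filter_upwards with k
    intro r hr
    obtain ⟨hl, hu⟩ := zr_bounds hξ hr
    have hzr0 : 0 < Real.exp (-(r/ξ)) := Real.exp_pos _
    have hM2 : |Fn 2 (ξ*k) (Real.exp (-(r/ξ)))| ≤ Mn 2 zl :=
      (abs_Fn_le 2 (ξ*k) hzr0).trans (Mn_antitone 2 hzl0 hl)
    have hM1 : |Fn 1 (ξ*k) (Real.exp (-(r/ξ)))| ≤ Mn 1 zl :=
      (abs_Fn_le 1 (ξ*k) hzr0).trans (Mn_antitone 1 hzl0 hl)
    have hKw := abs_Kik_le (ξ * k) (Real.exp_pos (-(y / ξ)))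
    have hS := abs_S_le hξ k
    have e0 : (0:ℝ) ≤ Real.exp (-(k ^ 2 * t) / 2) := (Real.exp_pos _).le
    rw [Real.norm_eq_abs]
    have habs : |W2 ξ y t r k| = Real.exp (-(k ^ 2 * t) / 2)
        * |Real.exp (-(r / ξ))^2 / ξ^2 * Fn 2 (ξ * k) (Real.exp (-(r / ξ)))
            - Real.exp (-(r / ξ)) / ξ^2 * Fn 1 (ξ * k) (Real.exp (-(r / ξ)))|
        * |Kik (ξ * k) (Real.exp (-(y / ξ)))| * |ξ * k * Real.sinh (Real.pi * ξ * k)| := by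
      unfold W2
      rw [abs_mul, abs_mul, abs_mul, abs_of_nonneg e0]
    rw [habs]
    have hmid : |Real.exp (-(r / ξ))^2 / ξ^2 * Fn 2 (ξ * k) (Real.exp (-(r / ξ)))
        - Real.exp (-(r / ξ)) / ξ^2 * Fn 1 (ξ * k) (Real.exp (-(r / ξ)))| ≤ D := by
      refine (abs_sub _ _).trans ?_
      rw [hD]
      have t1 : |Real.exp (-(r / ξ))^2 / ξ^2 * Fn 2 (ξ * k) (Real.exp (-(r / ξ)))|
          ≤ zu^2/ξ^2 * Mn 2 zl := by
        rw [abs_mul, abs_of_nonneg (by positivity : (0:ℝ) ≤ Real.exp (-(r / ξ))^2 / ξ^2)]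
        apply mul_le_mul _ hM2 (abs_nonneg _) (by positivity)
        exact (div_le_div_iff_of_pos_right (by positivity : (0:ℝ) < ξ^2)).2
          (pow_le_pow_left₀ hzr0.le hu 2)
      have t2 : |Real.exp (-(r / ξ)) / ξ^2 * Fn 1 (ξ * k) (Real.exp (-(r / ξ)))|
          ≤ zu/ξ^2 * Mn 1 zl := by
        rw [abs_mul, abs_of_nonneg (by positivity : (0:ℝ) ≤ Real.exp (-(r / ξ)) / ξ^2)]
        apply mul_le_mul _ hM1 (abs_nonneg _) (by positivity)
        exact (div_le_div_iff_of_pos_right (by positivity : (0:ℝ) < ξ^2)).2 hu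
      exact add_le_add t1 t2
    have s1 : Real.exp (-(k ^ 2 * t) / 2)
        * |Real.exp (-(r / ξ))^2 / ξ^2 * Fn 2 (ξ * k) (Real.exp (-(r / ξ)))
            - Real.exp (-(r / ξ)) / ξ^2 * Fn 1 (ξ * k) (Real.exp (-(r / ξ)))|
        ≤ Real.exp (-(k ^ 2 * t) / 2) * D :=
      mul_le_mul_of_nonneg_left hmid e0
    have s2 := mul_le_mul s1 hKw (abs_nonneg _) (mul_nonneg e0 hDnn)
    have s3 := mul_le_mul s2 hS (abs_nonneg _)
      (mul_nonneg (mul_nonneg e0 hDnn) (Mn_nonneg _ _))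
    refine s3.trans ?_
    have h1k : (1:ℝ) ≤ 1 + k^2 := by nlinarith [sq_nonneg k]
    calc Real.exp (-(k ^ 2 * t) / 2) * D * Mn 0 (Real.exp (-(y / ξ)))
          * (ξ * (|k| * Real.exp (Real.pi * ξ * |k|)))
        = C * (1 * ((|k| * Real.exp (Real.pi * ξ * |k|)) * Real.exp (-(k ^ 2 * t) / 2))) := by
          rw [hC]; ring
      _ ≤ C * ((1 + k^2) * ((|k| * Real.exp (Real.pi * ξ * |k|)) * Real.exp (-(k ^ 2 * t) / 2))) := by
          apply mul_le_mul_of_nonneg_left _ hCnn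
          apply mul_le_mul_of_nonneg_right h1k (by positivity)
      _ = C * bnd ξ t k := by unfold bnd; ring
  · filter_upwards with k
    intro r hr
    exact (((hasDerivAt_h1 ξ (ξ*k) hξ r).const_mul
        (Real.exp (-(k ^ 2 * t) / 2))).mul_const
        (Kik (ξ * k) (Real.exp (-(y / ξ))))).mul_const
        (ξ * k * Real.sinh (Real.pi * ξ * k))
end QxiAux

/-- Backward Kolmogorov equation for the killing Brownian motion:
`∂Q_ξ/∂t = (1/2) ∂²Q_ξ/∂x² - (1/(2ξ²)) e^{-2x/ξ} Q_ξ`. -/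
theorem Qxi_backward_kolmogorov (ξ : ℝ) (hξ : 0 < ξ) (y : ℝ) (t : ℝ) (ht : 0 < t) (x : ℝ) :
    deriv (fun s => Qxi ξ s y x) t
      = (1 / 2) * deriv (deriv (fun r => Qxi ξ t y r)) x
        - (1 / (2 * ξ ^ 2)) * Real.exp (-(2 * x / ξ)) * Qxi ξ t y x := by
  have hQs : (fun s => Qxi ξ s y x) = fun s => (1/Real.pi^2) * ∫ k : ℝ, Wfun ξ y s x k := rfl
  have hderivT : deriv (fun s => Qxi ξ s y x) t
      = (1/Real.pi^2) * ∫ k : ℝ, -(k ^ 2) / 2 * Wfun ξ y t x k := by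
    rw [hQs]
    exact ((stepT hξ ht y x).const_mul (1/Real.pi^2)).deriv
  have hD1 : deriv (fun r => Qxi ξ t y r) = fun r => (1/Real.pi^2) * ∫ k : ℝ, W1 ξ y t r k := by
    funext r
    have hQr : (fun r => Qxi ξ t y r) = fun r => (1/Real.pi^2) * ∫ k : ℝ, Wfun ξ y t r k := rfl
    rw [hQr]
    exact (((stepX1 hξ ht y r).2).const_mul (1/Real.pi^2)).deriv
  have hD2 : deriv (deriv (fun r => Qxi ξ t y r)) x
      = (1/Real.pi^2) * ∫ k : ℝ, W2 ξ y t x k := by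
    rw [hD1]
    exact (((stepX2 hξ ht y x).2).const_mul (1/Real.pi^2)).deriv
  have hQ : Qxi ξ t y x = (1/Real.pi^2) * ∫ k : ℝ, Wfun ξ y t x k := rfl
  rw [hderivT, hD2, hQ]
  have hWint := integrable_Wfun hξ ht y x
  have hW2int := (stepX2 hξ ht y x).1
  have hptwise : ∀ k : ℝ, -(k ^ 2) / 2 * Wfun ξ y t x k
      = (1/2) * W2 ξ y t x k
        - ((1/(2*ξ^2)) * Real.exp (-(2*x/ξ))) * Wfun ξ y t x k := by
    intro k
    have hode := pointwise_ode ξ k hξ x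
    have hz2 : Real.exp (-(2*x/ξ)) = Real.exp (-(x/ξ))^2 := by
      rw [sq, ← Real.exp_add]; ring_nf
    rw [hz2]
    unfold Wfun W2
    simp only [Kik_eq_Fn]
    linear_combination (-(Real.exp (-(k ^ 2 * t) / 2)
      * Fn 0 (ξ*k) (Real.exp (-(y/ξ))) * (ξ * k * Real.sinh (Real.pi * ξ * k)))) * hode
  have hsplit : ∫ k : ℝ, -(k ^ 2) / 2 * Wfun ξ y t x k
      = (1/2) * (∫ k : ℝ, W2 ξ y t x k)
        - (1/(2*ξ^2)) * Real.exp (-(2*x/ξ)) * ∫ k : ℝ, Wfun ξ y t x k := by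
    rw [show (fun k : ℝ => -(k ^ 2) / 2 * Wfun ξ y t x k)
        = fun k : ℝ => (1/2) * W2 ξ y t x k
          - ((1/(2*ξ^2)) * Real.exp (-(2*x/ξ))) * Wfun ξ y t x k from
      funext fun k => hptwise k]
    rw [integral_sub (hW2int.const_mul _) (hWint.const_mul _),
      integral_const_mul, integral_const_mul]
  rw [hsplit]
  ring
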